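/- For n ≥ 3 and nonnegative reals x_1, ..., x_n, equality holds in (x_1 + ⋯ + x_n)/n = (x_1⋯x_n)^{1/n} + (1/(n(n−1))) ∑_{i<j} (√x_i − √x_j)² if and only if all but one of the x_i are zero, or all the x_i are equal. -/

import Mathlib

open Finset

theorem quantitative_amgm_pairwise_equality (n : ℕ) (hn : 3 ≤ n) (x : Fin n → ℝ)
    (hx : ∀ i, 0 ≤ x i) :
    (∑ i, x i) / n =
      (∏ i, x i) ^ ((1 : ℝ) / n) +
        (1 / (n * (n - 1) : ℝ)) *
          ∑ i, ∑ j ∈ Finset.Ioi i, (Real.sqrt (x i) - Real.sqrt (x j)) ^ 2 ↔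
      (∃ i, ∀ j, j ≠ i → x j = 0) ∨ (∀ i j, x i = x j) := by
  have hn1 : (1:ℝ) < n := by exact_mod_cast (by omega : 1 < n)
  have hn0 : (0:ℝ) < n := by linarith
  have hnn : (0:ℝ) < (n:ℝ) * ((n:ℝ) - 1) := by nlinarith
  have hn1' : (n:ℝ) - 1 ≠ 0 := by linarith
  set s : Fin n → ℝ := fun i => Real.sqrt (x i) with hs
  have hsx : ∀ i, Real.sqrt (x i) = s i := fun i => (congrFun hs i).symm
  have hs0 : ∀ i, 0 ≤ s i := fun i => Real.sqrt_nonneg _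
  have hxs : ∀ i, x i = s i ^ 2 := fun i => (Real.sq_sqrt (hx i)).symm
  simp only [hsx]
  set P : ℝ := ∑ i, ∑ j ∈ Ioi i, s i * s j with hPdef
  set T : ℝ := ∑ i, x i with hT
  set G : ℝ := (∏ i, x i) ^ ((1:ℝ)/n) with hG
  -- symmetric double-sum tool
  have hsym : ∀ f : Fin n → ℝ,
      ∑ i, ∑ j ∈ Ioi i, (f i + f j) = ((n:ℝ) - 1) * ∑ i, f i := by
    intro f
    rw [show (∑ i, ∑ j ∈ Ioi i, (f i + f j)) = ∑ i, ∑ j ∈ Ioi i, (f j + f i) from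
      Finset.sum_congr rfl fun i _ => Finset.sum_congr rfl fun j _ => add_comm _ _,
      Finset.sum_sum_Ioi_add_eq_sum_sum_off_diag]
    trans (∑ i : Fin n, ((∑ k, f k) - f i))
    · refine Finset.sum_congr rfl fun i _ => ?_
      rw [eq_sub_iff_add_eq, ← Finset.sum_singleton f i]
      convert Finset.sum_compl_add_sum {i} f using 2
    · rw [Finset.sum_sub_distrib, Finset.sum_const, Finset.card_univ, Fintype.card_fin,
        nsmul_eq_mul]
      ring
  have hconst : ∀ r : ℝ, ∑ i : Fin n, ∑ j ∈ Ioi i, r = ((n:ℝ) * ((n:ℝ)-1) / 2) * r := by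
    intro r
    have h1 := hsym (fun _ => r / 2)
    calc ∑ i : Fin n, ∑ j ∈ Ioi i, r
        = ∑ i : Fin n, ∑ j ∈ Ioi i, (r/2 + r/2) := by norm_num
      _ = ((n:ℝ) - 1) * ∑ _i : Fin n, r / 2 := h1
      _ = ((n:ℝ) * ((n:ℝ)-1) / 2) * r := by
          rw [Finset.sum_const, Finset.card_univ, Fintype.card_fin, nsmul_eq_mul]; ring
  -- the pairwise square sum
  have hS : ∑ i, ∑ j ∈ Ioi i, (s i - s j) ^ 2 = ((n:ℝ) - 1) * T - 2 * P := by
    have e1 : ∀ i j : Fin n, (s i - s j) ^ 2 = (x i + x j) - 2 * (s i * s j) := by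
      intro i j; rw [hxs i, hxs j]; ring
    calc ∑ i, ∑ j ∈ Ioi i, (s i - s j) ^ 2
        = ∑ i, ∑ j ∈ Ioi i, ((x i + x j) - 2 * (s i * s j)) :=
          Finset.sum_congr rfl fun i _ => Finset.sum_congr rfl fun j _ => e1 i j
      _ = (∑ i, ∑ j ∈ Ioi i, (x i + x j)) - ∑ i, ∑ j ∈ Ioi i, 2 * (s i * s j) := by
          simp [Finset.sum_sub_distrib]
      _ = ((n:ℝ) - 1) * T - 2 * P := by
          rw [hsym x, ← hT]
          congr 1
          rw [hPdef, Finset.mul_sum]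
          exact Finset.sum_congr rfl fun i _ => (Finset.mul_sum _ _ _).symm
  -- reduce the statement
  have hmain : (T / n = G + (1 / ((n:ℝ) * ((n:ℝ) - 1))) * ∑ i, ∑ j ∈ Ioi i, (s i - s j) ^ 2)
      ↔ G = 2 * P / ((n:ℝ) * ((n:ℝ) - 1)) := by
    rw [hS]
    have hid : (1 / ((n:ℝ) * ((n:ℝ)-1))) * (((n:ℝ) - 1) * T - 2 * P)
        = T / n - 2 * P / ((n:ℝ) * ((n:ℝ)-1)) := by
      field_simp
    rw [hid]
    constructor <;> intro h <;> linarith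
  rw [hmain]
  constructor
  · -- forward
    intro h
    by_cases hpos : ∀ i, 0 < x i
    · -- all positive: right disjunct
      right
      have hspos : ∀ i, 0 < s i := fun i => Real.sqrt_pos.mpr (hpos i)
      have hw0 : ∀ q ∈ (Finset.univ.sigma fun i : Fin n => Ioi i),
          (0:ℝ) < 2 / ((n:ℝ) * ((n:ℝ)-1)) := fun q _ => by positivity
      have hw1 : ∑ _q ∈ (Finset.univ.sigma fun i : Fin n => Ioi i),
          (2 / ((n:ℝ) * ((n:ℝ)-1))) = 1 := by
        rw [Finset.sum_sigma, hconst]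
        field_simp
      have hmem : ∀ q ∈ (Finset.univ.sigma fun i : Fin n => Ioi i),
          s q.1 * s q.2 ∈ Set.Ioi (0:ℝ) :=
        fun q _ => mul_pos (hspos q.1) (hspos q.2)
      have hpull : ∀ (c : ℝ) (g : Fin n → Fin n → ℝ),
          ∑ i, ∑ j ∈ Ioi i, c * g i j = c * ∑ i, ∑ j ∈ Ioi i, g i j := by
        intro c g
        rw [Finset.mul_sum]
        exact Finset.sum_congr rfl fun i _ => (Finset.mul_sum _ _ _).symm
      have hsumwp : ∑ q ∈ (Finset.univ.sigma fun i : Fin n => Ioi i),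
          (2 / ((n:ℝ) * ((n:ℝ)-1))) • (s q.1 * s q.2) = G := by
        rw [Finset.sum_sigma]
        simp only [smul_eq_mul]
        rw [hpull, ← hPdef, h]
        ring
      have hprodpos : 0 < ∏ i, x i := Finset.prod_pos fun i _ => hpos i
      have hlogG : Real.log G = (1/(n:ℝ)) * ∑ i, Real.log (x i) := by
        rw [hG, Real.log_rpow hprodpos, Real.log_prod fun i _ => (hpos i).ne']
      have hlogsum : ∑ i, ∑ j ∈ Ioi i, Real.log (s i * s j)
          = ((n:ℝ) - 1) * ∑ i, Real.log (s i) := by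
        rw [← hsym (fun i => Real.log (s i))]
        exact Finset.sum_congr rfl fun i _ => Finset.sum_congr rfl fun j _ =>
          Real.log_mul (hspos i).ne' (hspos j).ne'
      have h_eq : Real.log (∑ q ∈ (Finset.univ.sigma fun i : Fin n => Ioi i),
            (2 / ((n:ℝ) * ((n:ℝ)-1))) • (s q.1 * s q.2))
          ≤ ∑ q ∈ (Finset.univ.sigma fun i : Fin n => Ioi i),
            (2 / ((n:ℝ) * ((n:ℝ)-1))) • Real.log (s q.1 * s q.2) := by
        rw [hsumwp, hlogG]
        have hr : ∑ q ∈ (Finset.univ.sigma fun i : Fin n => Ioi i),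
            (2 / ((n:ℝ) * ((n:ℝ)-1))) • Real.log (s q.1 * s q.2)
            = (2 / ((n:ℝ) * ((n:ℝ)-1))) * (((n:ℝ) - 1) * ∑ i, Real.log (s i)) := by
          rw [Finset.sum_sigma]
          simp only [smul_eq_mul]
          rw [hpull, hlogsum]
        rw [hr]
        have hx2 : ∑ i, Real.log (x i) = 2 * ∑ i, Real.log (s i) := by
          rw [Finset.mul_sum]
          refine Finset.sum_congr rfl fun i _ => ?_
          rw [hxs i, Real.log_pow]; push_cast; ring
        rw [hx2]
        apply le_of_eq
        field_simp
      have conc := strictConcaveOn_log_Ioi.eq_of_map_sum_eq hw0 hw1 hmem h_eq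
      have key : ∀ i j : Fin n, i < j → ∀ k l : Fin n, k < l → s i * s j = s k * s l := by
        intro i j hij k l hkl
        exact conc (j := ⟨i, j⟩) (k := ⟨k, l⟩)
          (Finset.mem_sigma.mpr ⟨Finset.mem_univ _, Finset.mem_Ioi.mpr hij⟩)
          (Finset.mem_sigma.mpr ⟨Finset.mem_univ _, Finset.mem_Ioi.mpr hkl⟩)
      have key2 : ∀ i j : Fin n, i ≠ j → ∀ k l : Fin n, k ≠ l → s i * s j = s k * s l := by
        intro i j hij k l hkl
        rcases hij.lt_or_gt with h1 | h1 <;> rcases hkl.lt_or_gt with h2 | h2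
        · exact key i j h1 k l h2
        · rw [mul_comm (s k)]; exact key i j h1 l k h2
        · rw [mul_comm (s i)]; exact key j i h1 k l h2
        · rw [mul_comm (s i), mul_comm (s k)]; exact key j i h1 l k h2
      intro a b
      rcases eq_or_ne a b with rfl | hab
      · rfl
      · have hcompl : (({a, b}ᶜ : Finset (Fin n))).Nonempty := by
          rw [← Finset.card_pos, Finset.card_compl, Fintype.card_fin]
          have h2 : ({a, b} : Finset (Fin n)).card ≤ 2 :=
            le_trans (Finset.card_insert_le _ _) (by simp)
          omega
        obtain ⟨c, hc⟩ := hcompl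
        simp only [Finset.mem_compl, Finset.mem_insert, Finset.mem_singleton, not_or] at hc
        obtain ⟨hca, hcb⟩ := hc
        have hsc : s c ≠ 0 := (hspos c).ne'
        have heq : s a * s c = s b * s c := key2 a c (Ne.symm hca) b c (Ne.symm hcb)
        have hsab : s a = s b := mul_right_cancel₀ hsc heq
        rw [hxs a, hxs b, hsab]
    · -- some x i = 0 : left disjunct
      left
      push_neg at hpos
      obtain ⟨k, hk⟩ := hpos
      have hk0 : x k = 0 := le_antisymm hk (hx k)
      have hprod0 : (∏ i, x i) = 0 := Finset.prod_eq_zero (Finset.mem_univ k) hk0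
      have hG0 : G = 0 := by
        rw [hG, hprod0, Real.zero_rpow (by positivity)]
      have hP0 : P = 0 := by
        have h2 := h
        rw [hG0, eq_comm, div_eq_iff hnn.ne'] at h2
        linarith
      have hterm : ∀ i : Fin n, ∀ j ∈ Ioi i, s i * s j = 0 := by
        have hsum0 : ∑ i, ∑ j ∈ Ioi i, s i * s j = 0 := hPdef.symm.trans hP0
        have h1 := (Finset.sum_eq_zero_iff_of_nonneg
          (fun i _ => Finset.sum_nonneg fun j _ => mul_nonneg (hs0 i) (hs0 j))).mp hsum0
        intro i j hj
        exact (Finset.sum_eq_zero_iff_of_nonneg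
          (fun j _ => mul_nonneg (hs0 i) (hs0 j))).mp (h1 i (Finset.mem_univ i)) j hj
      by_cases hall : ∀ j, x j = 0
      · exact ⟨⟨0, by omega⟩, fun j _ => hall j⟩
      · push_neg at hall
        obtain ⟨m, hm⟩ := hall
        have hmpos : 0 < x m := lt_of_le_of_ne (hx m) (Ne.symm hm)
        have hsm : s m ≠ 0 := by
          rw [← hsx]; exact (Real.sqrt_pos.mpr hmpos).ne'
        refine ⟨m, fun j hj => ?_⟩
        have hsj : s j = 0 := by
          rcases hj.lt_or_gt with h1 | h1
          · rcases mul_eq_zero.mp (hterm j m (Finset.mem_Ioi.mpr h1)) with h2 | h2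
            · exact h2
            · exact absurd h2 hsm
          · rcases mul_eq_zero.mp (hterm m j (Finset.mem_Ioi.mpr h1)) with h2 | h2
            · exact absurd h2 hsm
            · exact h2
        rw [hxs j, hsj]; ring
  · -- backward
    rintro (⟨i, hi⟩ | hall)
    · -- all but one zero
      haveI : Nontrivial (Fin n) := Fin.nontrivial_iff_two_le.mpr (by omega)
      obtain ⟨j, hj⟩ := exists_ne i
      have hprod0 : (∏ i, x i) = 0 := Finset.prod_eq_zero (Finset.mem_univ j) (hi j hj)
      have hG0 : G = 0 := by rw [hG, hprod0, Real.zero_rpow (by positivity)]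
      have hP0 : P = 0 := by
        rw [hPdef]
        apply Finset.sum_eq_zero
        intro a _
        apply Finset.sum_eq_zero
        intro b hb
        have hab : a ≠ b := (Finset.mem_Ioi.mp hb).ne
        have hz : x a = 0 ∨ x b = 0 := by
          by_cases ha : a = i
          · right
            exact hi b (by rw [← ha]; exact hab.symm)
          · left; exact hi a ha
        rcases hz with h1 | h1
        · have : s a = 0 := by rw [← hsx, h1, Real.sqrt_zero]
          rw [this, zero_mul]
        · have : s b = 0 := by rw [← hsx, h1, Real.sqrt_zero]
          rw [this, mul_zero]
      rw [hG0, hP0]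
      simp
    · -- all equal
      have hnpos : 0 < n := by omega
      set i0 : Fin n := ⟨0, hnpos⟩ with hi0
      set c : ℝ := x i0 with hc
      have hceq : ∀ i, x i = c := fun i => hall i i0
      have hc0 : 0 ≤ c := hx i0
      have hGc : G = c := by
        rw [hG]
        have hp : (∏ i, x i) = c ^ n := by
          rw [Finset.prod_congr rfl fun i _ => hceq i, Finset.prod_const, Finset.card_univ,
            Fintype.card_fin]
        rw [hp, ← Real.rpow_natCast c n, ← Real.rpow_mul hc0, mul_one_div,
          div_self hn0.ne', Real.rpow_one]
      have hPc : P = ((n:ℝ) * ((n:ℝ) - 1) / 2) * c := by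
        rw [hPdef, ← hconst c]
        refine Finset.sum_congr rfl fun a _ => Finset.sum_congr rfl fun b _ => ?_
        rw [← hsx, ← hsx, hceq a, hceq b, Real.mul_self_sqrt hc0]
      rw [hGc, hPc]
      field_simp
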